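/- Let R be a binary tree, let M be a model of the L-theory T_R, let φ'(x, y, z̄) be an L-formula in prenex normal form with radius r, let c̄ be a tuple of elements of M, and suppose the formula φ(x, y) := φ'(x, y, c̄) is mutually algebraic over M. Then there is a finite set X ⊆ M such that for all a, b ∈ M with M ⊨ φ(a, b), either the distance between a and b is at most r, or a ∈ X, or b ∈ X. -/

import Mathlib

open FirstOrder FirstOrder.Language

/-- The function symbols of the language `L`: a constant `0` and unary functions `S`, `P`. -/
inductive LFunc : ℕ → Type
  | zero : LFunc 0
  | succ : LFunc 1
  | pred : LFunc 1

/-- The relation symbols of the language `L`: a unary relation `A`. -/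
inductive LRel : ℕ → Type
  | A : LRel 1

/-- The first-order language with a constant symbol `0`, unary function symbols `S` and `P`,
and a unary relation symbol `A`. -/
def L : Language := ⟨LFunc, LRel⟩

/-- The reduct `L₀` of `L` without the relation symbol `A`. -/
def L₀ : Language := ⟨LFunc, fun _ => Empty⟩

/-- The inclusion of `L₀` into `L`. -/
def incl : L₀ →ᴸ L where
  onFunction := fun {_} f => f
  onRelation := fun {_} r => Empty.elim r

/-- `ℤ` as an `L₀`-structure, interpreting `0` as zero, `S` as successor, `P` as predecessor. -/
instance intL0Structure : L₀.Structure ℤ where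
  funMap := fun f v => match f with
    | .zero => 0
    | .succ => v 0 + 1
    | .pred => v 0 - 1
  RelMap := fun r _ => Empty.elim r

/-- The `L`-term `0`. -/
def zeroT {α : Type*} : L.Term α := Term.func LFunc.zero ![]

/-- The `L`-term `S t`. -/
def succT {α : Type*} (t : L.Term α) : L.Term α := Term.func LFunc.succ ![t]

/-- The `L`-term `P t`. -/
def predT {α : Type*} (t : L.Term α) : L.Term α := Term.func LFunc.pred ![t]

/-- The `L`-term `Sᵏ t`. -/
def iterST {α : Type*} (k : ℕ) (t : L.Term α) : L.Term α := succT^[k] t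

/-- The `L`-term `Pᵏ t`. -/
def iterPT {α : Type*} (k : ℕ) (t : L.Term α) : L.Term α := predT^[k] t

/-- The atomic `L`-formula `A t`. -/
def Aform {α : Type*} (t : L.Term α) : L.Formula α := Relations.formula LRel.A ![t]

/-- The disjunction of the formulas `f i` for `i ∈ s` (the older Mathlib `BoundedFormula.iSup`). -/
noncomputable def finsetISup {L : Language} {α β : Type*} {n : ℕ} (s : Finset β)
    (f : β → L.BoundedFormula α n) : L.BoundedFormula α n :=
  (s.toList.map f).foldr (· ⊔ ·) ⊥

/-- The conjunction of the formulas `f i` for `i ∈ s` (the older Mathlib `BoundedFormula.iInf`). -/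
noncomputable def finsetIInf {L : Language} {α β : Type*} {n : ℕ} (s : Finset β)
    (f : β → L.BoundedFormula α n) : L.BoundedFormula α n :=
  (s.toList.map f).foldr (· ⊓ ·) ⊤

/-- The sentence asserting that the truth values of `A(0), A(S0), …, A(Sⁿ⁻¹0)` follow the
pattern `σ`. -/
noncomputable def patternSentence (n : ℕ) (σ : Fin n → Bool) : L.Sentence :=
  finsetIInf Finset.univ fun i : Fin n =>
    if σ i then Aform (iterST i zeroT) else (Aform (iterST i zeroT)).not

/-- The `n`-th tree axiom for `R`: the disjunction, over all length-`n` strings `σ ∈ R`, of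
the sentence asserting that `A(0), …, A(Sⁿ⁻¹0)` follow the pattern `σ`. -/
noncomputable def treeAxiom (R : Set (List Bool)) (n : ℕ) : L.Sentence :=
  letI := Classical.decPred fun σ : Fin n → Bool => List.ofFn σ ∈ R
  finsetISup (Finset.univ.filter fun σ : Fin n → Bool => List.ofFn σ ∈ R)
    (patternSentence n)

/-- The theory `T_R`: all `L₀`-sentences true in `(ℤ, 0, succ, pred)`, together with the
tree axioms for `R`. -/
noncomputable def TR (R : Set (List Bool)) : L.Theory :=
  incl.onTheory (L₀.completeTheory ℤ) ∪ Set.range (treeAxiom R)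

/-- `R ⊆ List Bool` is a binary tree if it is closed under initial segments. -/
def IsBinaryTree (R : Set (List Bool)) : Prop :=
  ∀ σ ∈ R, ∀ τ : List Bool, τ <+: σ → τ ∈ R

/-- The length-`n` initial segment of an infinite binary sequence `x : ℕ → Bool`. -/
def initSeg (x : ℕ → Bool) (n : ℕ) : List Bool :=
  List.ofFn fun i : Fin n => x i

/-- The interpretation of `S` in an `L`-structure. -/
def SM {M : Type*} [L.Structure M] (a : M) : M :=
  Structure.funMap (L := L) LFunc.succ ![a]

/-- The interpretation of `P` in an `L`-structure. -/
def PM {M : Type*} [L.Structure M] (a : M) : M :=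
  Structure.funMap (L := L) LFunc.pred ![a]

/-- The interpretation of `0` in an `L`-structure. -/
def zeroM {M : Type*} [L.Structure M] : M :=
  Structure.funMap (L := L) LFunc.zero ![]

/-- The interpretation of `A` in an `L`-structure. -/
def AM {M : Type*} [L.Structure M] (a : M) : Prop :=
  Structure.RelMap (L := L) LRel.A ![a]

/-- `a + k`: apply `S` (if `k ≥ 0`) or `P` (if `k < 0`) `|k|` many times to `a`. -/
def shift {M : Type*} [L.Structure M] (a : M) (k : ℤ) : M :=
  if 0 ≤ k then SM^[k.toNat] a else PM^[(-k).toNat] a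

/-- `a` and `b` have the same `r`-neighborhood type: for every `k` with `|k| ≤ r`,
`A(a + k)` holds iff `A(b + k)` holds. -/
def SameNbhdType {M : Type*} [L.Structure M] (r : ℕ) (a b : M) : Prop :=
  ∀ k : ℤ, |k| ≤ (r : ℤ) → (AM (shift a k) ↔ AM (shift b k))

/-- The tuples `a` and `b` (with the convention that the `0`-th coordinate is `0^M`) have the
same `r`-type: the same `r`-distance table (for all indices `i`, `j` and all `k` with
`|k| ≤ r`, the `j`-th coordinate equals the `i`-th coordinate plus `k` on one side iff it
does on the other) and the same `r`-neighborhood types coordinatewise. -/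
def extTuple {M : Type*} [L.Structure M] {n : ℕ} (a : Fin n → M) : Fin (n + 1) → M :=
  Fin.cases zeroM a

/-- Same `r`-type of two tuples (see above). -/
def SameRType {M : Type*} [L.Structure M] {n : ℕ} (r : ℕ) (a b : Fin n → M) : Prop :=
  (∀ i j : Fin (n + 1), ∀ k : ℤ, |k| ≤ (r : ℤ) →
      (extTuple a j = shift (extTuple a i) k ↔ extTuple b j = shift (extTuple b i) k)) ∧
  ∀ i : Fin n, SameNbhdType r (a i) (b i)

/-- The number of occurrences of `S` and `P` contributed by a single function symbol. -/
def funcWeight : ∀ {n : ℕ}, L.Functions n → ℕ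
  | _, LFunc.zero => 0
  | _, LFunc.succ => 1
  | _, LFunc.pred => 1

/-- The total number of occurrences of `S` and `P` in a term. -/
def termRad {α : Type*} : L.Term α → ℕ
  | .var _ => 0
  | .func f ts => funcWeight f + Finset.univ.sum fun i => termRad (ts i)

/-- The radius of a formula: for quantifier-free formulas, the total number of occurrences of
`S` and `P`; each quantifier doubles the radius. -/
def rad {α : Type*} : ∀ {n : ℕ}, L.BoundedFormula α n → ℕ
  | _, .falsum => 0
  | _, .equal t₁ t₂ => termRad t₁ + termRad t₂
  | _, .rel _ ts => Finset.univ.sum fun i => termRad (ts i)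
  | _, .imp φ ψ => rad φ + rad ψ
  | _, .all φ => 2 * rad φ

/-- A formula `φ` with free variables `Fin n` and parameters from `M` (the `Sum.inr`
variables, which are always assigned to themselves via `id`) is *mutually algebraic over `M`*
if there is `k : ℕ` such that for every partition of the free variables `Fin n` into two
nonempty sets `s` and `sᶜ` and every assignment `a` to the variables in `s`, there are at
most `k` assignments to the variables in `sᶜ` making `φ` true. -/
def IsMutuallyAlgebraic (L' : Language) (M : Type*) [L'.Structure M] {n : ℕ}
    (φ : L'.Formula (Fin n ⊕ M)) : Prop :=
  ∃ k : ℕ, ∀ s : Set (Fin n), s.Nonempty → sᶜ.Nonempty → ∀ a : Fin n → M,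
    {v : Fin n → M | (∀ i ∈ s, v i = a i) ∧ φ.Realize (Sum.elim v id)}.Finite ∧
    {v : Fin n → M | (∀ i ∈ s, v i = a i) ∧ φ.Realize (Sum.elim v id)}.ncard ≤ k

namespace MAProof
open FirstOrder FirstOrder.Language

/-- variable term over L₀ -/
def varT0 : L₀.Term (Empty ⊕ Fin 1) := Term.var (Sum.inr 0)

def succT0 (t : L₀.Term (Empty ⊕ Fin 1)) : L₀.Term (Empty ⊕ Fin 1) :=
  Term.func LFunc.succ ![t]

def predT0 (t : L₀.Term (Empty ⊕ Fin 1)) : L₀.Term (Empty ⊕ Fin 1) :=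
  Term.func LFunc.pred ![t]

def sentPS : L₀.Sentence := BoundedFormula.all ((predT0 (succT0 varT0)).bdEqual varT0)
def sentSP : L₀.Sentence := BoundedFormula.all ((succT0 (predT0 varT0)).bdEqual varT0)
def sentAcyc (n : ℕ) : L₀.Sentence :=
  BoundedFormula.all (((succT0^[n+1] varT0).bdEqual varT0).not)

lemma int_realize_succT0 (v : Empty ⊕ Fin 1 → ℤ) (t : L₀.Term (Empty ⊕ Fin 1)) :
    (succT0 t).realize v = t.realize v + 1 := rfl

lemma int_realize_iter (n : ℕ) (v : Empty ⊕ Fin 1 → ℤ) (t : L₀.Term (Empty ⊕ Fin 1)) :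
    (succT0^[n] t).realize v = t.realize v + n := by
  induction n with
  | zero => simp
  | succ n ih =>
    rw [Function.iterate_succ_apply', int_realize_succT0, ih]
    push_cast; ring

lemma int_funMap_succ (v : Fin 1 → ℤ) :
    Structure.funMap (L := L₀) LFunc.succ v = v 0 + 1 := rfl

lemma int_funMap_pred (v : Fin 1 → ℤ) :
    Structure.funMap (L := L₀) LFunc.pred v = v 0 - 1 := rfl

lemma int_sentPS : (ℤ : Type) ⊨ sentPS := by
  intro x
  simp [BoundedFormula.realize_bdEqual, predT0, succT0, varT0, Term.realize, int_funMap_succ, int_funMap_pred]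

lemma int_sentSP : (ℤ : Type) ⊨ sentSP := by
  intro x
  simp [BoundedFormula.realize_bdEqual, predT0, succT0, varT0, Term.realize, int_funMap_succ, int_funMap_pred]

lemma int_sentAcyc (n : ℕ) : (ℤ : Type) ⊨ sentAcyc n := by
  intro x
  simp only [sentAcyc, BoundedFormula.realize_not, BoundedFormula.realize_bdEqual]
  rw [Function.iterate_succ_apply, int_realize_iter]
  simp [varT0, succT0, Term.realize, int_funMap_succ]
  omega

section Transfer
variable {M : Type*} [L.Structure M] {R : Set (List Bool)}

lemma realize_of_int (hM : M ⊨ TR R) (ψ : L₀.Sentence) (h : (ℤ : Type) ⊨ ψ) :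
    @Sentence.Realize L₀ M (incl.reduct M) ψ := by
  letI : L₀.Structure M := incl.reduct M
  have h1 : M ⊨ incl.onSentence ψ :=
    haveI := hM
    Theory.realize_sentence_of_mem (TR R)
      (Set.mem_union_left _ ⟨ψ, mem_completeTheory.2 h, rfl⟩)
  exact (incl.realize_onSentence (M := M) ψ).1 h1

lemma funMap_succ_eq (v : Fin 1 → M) :
    Structure.funMap (L := L) LFunc.succ v = SM (v 0) := by
  have hv : v = ![v 0] := by
    funext i; rw [Subsingleton.elim i 0]; rfl
  rw [hv]; rfl

lemma funMap_pred_eq (v : Fin 1 → M) :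
    Structure.funMap (L := L) LFunc.pred v = PM (v 0) := by
  have hv : v = ![v 0] := by
    funext i; rw [Subsingleton.elim i 0]; rfl
  rw [hv]; rfl

lemma reduct_funMap (f : LFunc 1) (v : Fin 1 → M) :
    @Structure.funMap L₀ M (incl.reduct M) 1 f v = Structure.funMap (L := L) f v := rfl

lemma M_realize_succT0 (v : Empty ⊕ Fin 1 → M) (t : L₀.Term (Empty ⊕ Fin 1)) :
    @Term.realize L₀ M (incl.reduct M) _ v (succT0 t) =
      SM (@Term.realize L₀ M (incl.reduct M) _ v t) := by
  have h0 : @Term.realize L₀ M (incl.reduct M) _ v (succT0 t) =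
      @Structure.funMap L₀ M (incl.reduct M) 1 LFunc.succ
        (fun i => @Term.realize L₀ M (incl.reduct M) _ v ((![t] : _) i)) := rfl
  rw [h0, reduct_funMap, funMap_succ_eq]
  simp

lemma M_realize_predT0 (v : Empty ⊕ Fin 1 → M) (t : L₀.Term (Empty ⊕ Fin 1)) :
    @Term.realize L₀ M (incl.reduct M) _ v (predT0 t) =
      PM (@Term.realize L₀ M (incl.reduct M) _ v t) := by
  have h0 : @Term.realize L₀ M (incl.reduct M) _ v (predT0 t) =
      @Structure.funMap L₀ M (incl.reduct M) 1 LFunc.pred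
        (fun i => @Term.realize L₀ M (incl.reduct M) _ v ((![t] : _) i)) := rfl
  rw [h0, reduct_funMap, funMap_pred_eq]
  simp

lemma M_realize_varT0 (x : M) :
    @Term.realize L₀ M (incl.reduct M) _
      (Sum.elim (default : Empty → M) (Fin.snoc (default : Fin 0 → M) x)) varT0 = x := by
  show Sum.elim (default : Empty → M) (Fin.snoc (default : Fin 0 → M) x) (Sum.inr 0) = x
  simp [Fin.snoc]

lemma M_PS (hM : M ⊨ TR R) : ∀ x : M, PM (SM x) = x := by
  letI : L₀.Structure M := incl.reduct M
  intro x
  have h2 := realize_of_int hM sentPS int_sentPS x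
  rw [show (predT0 (succT0 varT0) =' varT0).Realize
        (default : Empty → M) (Fin.snoc (default : Fin 0 → M) x) ↔ _ from
      BoundedFormula.realize_bdEqual _ _] at h2
  rw [M_realize_predT0, M_realize_succT0, M_realize_varT0] at h2
  exact h2

lemma M_SP (hM : M ⊨ TR R) : ∀ x : M, SM (PM x) = x := by
  letI : L₀.Structure M := incl.reduct M
  intro x
  have h2 := realize_of_int hM sentSP int_sentSP x
  rw [show (succT0 (predT0 varT0) =' varT0).Realize
        (default : Empty → M) (Fin.snoc (default : Fin 0 → M) x) ↔ _ from
      BoundedFormula.realize_bdEqual _ _] at h2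
  rw [M_realize_succT0, M_realize_predT0, M_realize_varT0] at h2
  exact h2

lemma M_realize_iterS (n : ℕ) (v : Empty ⊕ Fin 1 → M) (t : L₀.Term (Empty ⊕ Fin 1)) :
    @Term.realize L₀ M (incl.reduct M) _ v (succT0^[n] t) =
      SM^[n] (@Term.realize L₀ M (incl.reduct M) _ v t) := by
  induction n with
  | zero => simp
  | succ n ih =>
    rw [Function.iterate_succ_apply', Function.iterate_succ_apply',
      M_realize_succT0, ih]

lemma M_acyc (hM : M ⊨ TR R) : ∀ n : ℕ, ∀ x : M, SM^[n+1] x ≠ x := by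
  letI : L₀.Structure M := incl.reduct M
  intro n x hx
  have h := realize_of_int hM (sentAcyc n) (int_sentAcyc n) x
  apply h
  rw [show ((succT0^[n+1] varT0) =' varT0).Realize
        (default : Empty → M) (Fin.snoc (default : Fin 0 → M) x) ↔ _ from
      BoundedFormula.realize_bdEqual _ _]
  rw [M_realize_iterS, M_realize_varT0]
  exact hx

end Transfer
end MAProof
namespace MAProof
section Shift
variable {M : Type*} [L.Structure M]

/-- The successor as a permutation of `M`. -/
def ePerm (h1 : ∀ x : M, PM (SM x) = x) (h2 : ∀ x : M, SM (PM x) = x) : Equiv.Perm M :=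
  ⟨SM, PM, h1, h2⟩

variable (h1 : ∀ x : M, PM (SM x) = x) (h2 : ∀ x : M, SM (PM x) = x)
include h1 h2

lemma ePerm_pow_apply (n : ℕ) (a : M) : ((ePerm h1 h2) ^ n) a = SM^[n] a := by
  induction n generalizing a with
  | zero => rfl
  | succ n ih =>
    rw [pow_succ, Equiv.Perm.mul_apply]
    have : (ePerm h1 h2) a = SM a := rfl
    rw [this, ih, ← Function.iterate_succ_apply]

lemma ePerm_inv_pow_apply (n : ℕ) (a : M) : (((ePerm h1 h2)⁻¹) ^ n) a = PM^[n] a := by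
  induction n generalizing a with
  | zero => rfl
  | succ n ih =>
    rw [pow_succ, Equiv.Perm.mul_apply]
    have : ((ePerm h1 h2)⁻¹) a = PM a := rfl
    rw [this, ih, ← Function.iterate_succ_apply]

lemma shift_eq_zpow (a : M) (k : ℤ) : shift a k = ((ePerm h1 h2) ^ k) a := by
  unfold shift
  by_cases hk : 0 ≤ k
  · rw [if_pos hk]
    obtain ⟨n, rfl⟩ := Int.eq_ofNat_of_zero_le hk
    rw [zpow_natCast, ePerm_pow_apply]
    simp
  · rw [if_neg hk]
    obtain ⟨n, rfl⟩ : ∃ n : ℕ, k = -(n : ℤ) := ⟨(-k).toNat, by omega⟩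
    rw [zpow_neg, zpow_natCast, ← inv_pow, ePerm_inv_pow_apply]
    simp

lemma shift_zero' (a : M) : shift a 0 = a := by
  rw [shift_eq_zpow h1 h2]; simp

lemma shift_shift (a : M) (k l : ℤ) : shift (shift a k) l = shift a (k + l) := by
  rw [shift_eq_zpow h1 h2, shift_eq_zpow h1 h2, shift_eq_zpow h1 h2,
    ← Equiv.Perm.mul_apply, ← zpow_add, add_comm]

lemma eq_shift_comm {a b : M} {k : ℤ} : a = shift b k ↔ b = shift a (-k) := by
  constructor
  · rintro rfl; rw [shift_shift h1 h2]; simp [shift_zero' h1 h2]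
  · rintro rfl; rw [shift_shift h1 h2]; simp [shift_zero' h1 h2]

lemma shift_eq_shift_iff {a b : M} {k l : ℤ} :
    shift a k = shift b l ↔ a = shift b (l - k) := by
  constructor
  · intro h
    have : shift (shift a k) (-k) = shift (shift b l) (-k) := by rw [h]
    rw [shift_shift h1 h2, shift_shift h1 h2] at this
    simpa [shift_zero' h1 h2, sub_eq_add_neg] using this
  · rintro rfl
    rw [shift_shift h1 h2]
    congr 1; ring

lemma shift_inj {a b : M} {k : ℤ} (h : shift a k = shift b k) : a = b := by
  rw [shift_eq_zpow h1 h2, shift_eq_zpow h1 h2] at h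
  exact (Equiv.injective _) h

lemma shift_ne_self (h3 : ∀ n : ℕ, ∀ x : M, SM^[n+1] x ≠ x)
    {k : ℤ} (hk : k ≠ 0) (a : M) : shift a k ≠ a := by
  have hpos : ∀ l : ℤ, 0 < l → ∀ b : M, shift b l ≠ b := by
    intro l hl b
    unfold shift
    rw [if_pos hl.le]
    have : l.toNat = (l.toNat - 1) + 1 := by omega
    rw [this]
    exact h3 _ b
  rcases lt_or_gt_of_ne hk with hneg | hpos'
  · intro hcontra
    have : shift a (-k) = a := by
      conv_lhs => rw [← hcontra]
      rw [shift_shift h1 h2]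
      simp [shift_zero' h1 h2]
    exact hpos (-k) (by omega) a this
  · exact hpos k hpos' a

end Shift
end MAProof
namespace MAProof
section EF
variable {M : Type*} [L.Structure M]

lemma sm_shift (a : M) : SM a = shift a 1 := by
  simp [shift]

lemma pm_shift (a : M) : PM a = shift a (-1) := by
  simp [shift]

/-- The matching invariant between two valuations. -/
def Inv (ρ : ℤ) {β : Type*} (f g : β → M) : Prop :=
  (∀ i j : β, ∀ k : ℤ, |k| ≤ ρ → (f j = shift (f i) k ↔ g j = shift (g i) k)) ∧
  (∀ i j : β, ∀ k : ℤ, |k| ≤ ρ → (f i = shift (g j) k ↔ g i = shift (f j) k)) ∧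
  (∀ i : β, ∀ k : ℤ, |k| ≤ ρ → (f i = shift zeroM k ↔ g i = shift zeroM k)) ∧
  (∀ i : β, ∀ k : ℤ, |k| ≤ ρ → (AM (shift (f i) k) ↔ AM (shift (g i) k)))

lemma Inv.symm {ρ : ℤ} {β : Type*} {f g : β → M} (h : Inv ρ f g) : Inv ρ g f :=
  ⟨fun i j k hk => (h.1 i j k hk).symm,
   fun i j k hk => (h.2.1 i j k hk).symm,
   fun i k hk => (h.2.2.1 i k hk).symm,
   fun i k hk => (h.2.2.2 i k hk).symm⟩

lemma Inv.comp {ρ : ℤ} {β γ : Type*} {f g : β → M} (h : Inv ρ f g) (u : γ → β) :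
    Inv ρ (f ∘ u) (g ∘ u) :=
  ⟨fun i j k hk => h.1 (u i) (u j) k hk,
   fun i j k hk => h.2.1 (u i) (u j) k hk,
   fun i k hk => h.2.2.1 (u i) k hk,
   fun i k hk => h.2.2.2 (u i) k hk⟩

variable (h1 : ∀ x : M, PM (SM x) = x) (h2 : ∀ x : M, SM (PM x) = x)
include h1 h2

omit h1 h2 in
lemma funMap_zero_eq (v : Fin 0 → M) :
    Structure.funMap (L := L) LFunc.zero v = zeroM := by
  have hv : v = ![] := funext fun i => i.elim0
  rw [hv]; rfl

lemma term_root {β : Type*} (t : L.Term β) :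
    (∃ i : β, ∃ k : ℤ, |k| ≤ (termRad t : ℤ) ∧ ∀ f : β → M, t.realize f = shift (f i) k) ∨
    (∃ k : ℤ, |k| ≤ (termRad t : ℤ) ∧ ∀ f : β → M, t.realize f = shift zeroM k) := by
  induction t with
  | var i =>
    exact Or.inl ⟨i, 0, by simp, fun f => (shift_zero' h1 h2 (f i)).symm⟩
  | func F ts ih =>
    cases F with
    | zero =>
      refine Or.inr ⟨0, by simp, fun f => ?_⟩
      rw [shift_zero' h1 h2]
      exact funMap_zero_eq _
    | succ =>
      have hrad : (termRad (Term.func LFunc.succ ts) : ℤ) = termRad (ts 0) + 1 := by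
        simp [termRad, funcWeight]; push_cast; ring
      have hreal : ∀ f : β → M, (Term.func LFunc.succ ts).realize f = SM ((ts 0).realize f) := by
        intro f
        exact funMap_succ_eq _
      rcases ih 0 with ⟨i, k, hk, e⟩ | ⟨k, hk, e⟩
      · refine Or.inl ⟨i, k + 1, by rw [hrad]; have h' := abs_le.1 hk; rw [abs_le]; omega, fun f => ?_⟩
        rw [hreal, e, sm_shift, shift_shift h1 h2]
      · refine Or.inr ⟨k + 1, by rw [hrad]; have h' := abs_le.1 hk; rw [abs_le]; omega, fun f => ?_⟩
        rw [hreal, e, sm_shift, shift_shift h1 h2]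
    | pred =>
      have hrad : (termRad (Term.func LFunc.pred ts) : ℤ) = termRad (ts 0) + 1 := by
        simp [termRad, funcWeight]; push_cast; ring
      have hreal : ∀ f : β → M, (Term.func LFunc.pred ts).realize f = PM ((ts 0).realize f) := by
        intro f
        exact funMap_pred_eq _
      rcases ih 0 with ⟨i, k, hk, e⟩ | ⟨k, hk, e⟩
      · refine Or.inl ⟨i, k - 1, by rw [hrad]; have h' := abs_le.1 hk; rw [abs_le]; omega, fun f => ?_⟩
        rw [hreal, e, pm_shift, shift_shift h1 h2]
        congr 1
      · refine Or.inr ⟨k - 1, by rw [hrad]; have h' := abs_le.1 hk; rw [abs_le]; omega, fun f => ?_⟩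
        rw [hreal, e, pm_shift, shift_shift h1 h2]
        congr 1

end EF
end MAProof
namespace MAProof
section EFQF
variable {M : Type*} [L.Structure M]

lemma relMap_A_eq (v : Fin 1 → M) :
    Structure.RelMap (L := L) LRel.A v ↔ AM (v 0) := by
  have hv : v = ![v 0] := by
    funext i; rw [Subsingleton.elim i 0]; rfl
  rw [hv]; exact Iff.rfl

variable (h1 : ∀ x : M, PM (SM x) = x) (h2 : ∀ x : M, SM (PM x) = x)
include h1 h2

lemma ef_qf {α : Type*} {n : ℕ} {φ : L.BoundedFormula α n} (hqf : φ.IsQF) :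
    ∀ ρ : ℤ, (rad φ : ℤ) ≤ ρ →
    ∀ (v : α → M) (xs : Fin n → M) (w : α → M) (ys : Fin n → M),
      Inv ρ (Sum.elim v xs) (Sum.elim w ys) → (φ.Realize v xs ↔ φ.Realize w ys) := by
  induction hqf with
  | falsum =>
    intro ρ hρ v xs w ys hInv
    exact Iff.rfl
  | of_isAtomic h =>
    cases h with
    | equal t₁ t₂ =>
      intro ρ hρ v xs w ys hInv
      have hre : rad (t₁.bdEqual t₂) = termRad t₁ + termRad t₂ := rfl
      rw [hre] at hρ
      push_cast at hρ
      rw [BoundedFormula.realize_bdEqual, BoundedFormula.realize_bdEqual]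
      rcases term_root h1 h2 t₁ with ⟨i, k₁, hk₁, e₁⟩ | ⟨k₁, hk₁, e₁⟩ <;>
        rcases term_root h1 h2 t₂ with ⟨j, k₂, hk₂, e₂⟩ | ⟨k₂, hk₂, e₂⟩
      · rw [e₁, e₁, e₂, e₂, shift_eq_shift_iff h1 h2, shift_eq_shift_iff h1 h2]
        exact hInv.1 j i (k₂ - k₁)
          (by have a1 := abs_le.1 hk₁; have a2 := abs_le.1 hk₂; rw [abs_le]; omega)
      · rw [e₁, e₁, e₂, e₂, shift_eq_shift_iff h1 h2, shift_eq_shift_iff h1 h2]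
        exact hInv.2.2.1 i (k₂ - k₁)
          (by have a1 := abs_le.1 hk₁; have a2 := abs_le.1 hk₂; rw [abs_le]; omega)
      · rw [e₁, e₁, e₂, e₂, eq_comm (a := shift zeroM k₁),
          eq_comm (a := shift zeroM k₁), shift_eq_shift_iff h1 h2, shift_eq_shift_iff h1 h2]
        exact hInv.2.2.1 j (k₁ - k₂)
          (by have a1 := abs_le.1 hk₁; have a2 := abs_le.1 hk₂; rw [abs_le]; omega)
      · rw [e₁, e₁, e₂, e₂]
    | rel r ts =>
      intro ρ hρ v xs w ys hInv
      cases r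
      have hre : rad (Relations.boundedFormula LRel.A ts) = termRad (ts 0) := by
        show (Finset.univ.sum fun i => termRad (ts i)) = _
        simp
      rw [hre] at hρ
      change Structure.RelMap (L := L) LRel.A (fun i => (ts i).realize (Sum.elim v xs)) ↔
        Structure.RelMap (L := L) LRel.A (fun i => (ts i).realize (Sum.elim w ys))
      rw [relMap_A_eq, relMap_A_eq]
      rcases term_root h1 h2 (ts 0) with ⟨i, k, hk, e⟩ | ⟨k, hk, e⟩
      · rw [e, e]
        exact hInv.2.2.2 i k (le_trans hk hρ)
      · rw [e, e]
  | @imp φ₁ φ₂ hq1 hq2 ih1 ih2 =>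
    intro ρ hρ v xs w ys hInv
    have hre : rad (φ₁.imp φ₂) = rad φ₁ + rad φ₂ := rfl
    rw [hre] at hρ
    push_cast at hρ
    rw [BoundedFormula.realize_imp, BoundedFormula.realize_imp]
    have c1 : (0:ℤ) ≤ (rad φ₁ : ℤ) := Int.natCast_nonneg _
    have c2 : (0:ℤ) ≤ (rad φ₂ : ℤ) := Int.natCast_nonneg _
    rw [ih1 ρ (by omega) v xs w ys hInv, ih2 ρ (by omega) v xs w ys hInv]

end EFQF
end MAProof
namespace MAProof
section Ext
variable {M : Type*} [L.Structure M]
variable (h1 : ∀ x : M, PM (SM x) = x) (h2 : ∀ x : M, SM (PM x) = x)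
include h1 h2

set_option maxHeartbeats 1000000 in
lemma inv_extend {β : Type*} {ρ ρ' : ℤ} (hρ'0 : 0 ≤ ρ') (hρ : 2 * ρ' ≤ ρ)
    {f g : β → M} (h : Inv ρ f g) (x : M) :
    ∃ y : M, Inv ρ' (fun o : Option β => o.elim x f) (fun o : Option β => o.elim y g) := by
  obtain ⟨T, C, Z, N⟩ := h
  have SS := shift_shift h1 h2
  have E1 : ∀ (a b : M) (k l : ℤ), (shift a k = shift b l) ↔ a = shift b (l - k) :=
    fun a b k l => shift_eq_shift_iff h1 h2
  have E2 : ∀ (a b : M) (k : ℤ), (a = shift b k) ↔ b = shift a (-k) :=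
    fun a b k => eq_shift_comm h1 h2
  by_cases c0 : ∃ k0 : ℤ, |k0| ≤ ρ' ∧ x = shift zeroM k0
  · -- x is near 0 : take y = x
    obtain ⟨k0, hk0, hx⟩ := c0
    have hk0' := abs_le.1 hk0
    refine ⟨x, ?_, ?_, ?_, ?_⟩
    · rintro (_|i) (_|j) k hk
      · exact Iff.rfl
      · have hk' := abs_le.1 hk
        have hb : ∀ u : M, (u = shift x k) ↔ u = shift zeroM (k0 + k) :=
          fun u => by rw [hx, SS]
        exact (hb _).trans ((Z j (k0 + k) (abs_le.2 ⟨by omega, by omega⟩)).trans (hb _).symm)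
      · have hk' := abs_le.1 hk
        have ha : ∀ u : M, (x = shift u k) ↔ u = shift zeroM (k0 + -k) :=
          fun u => (E2 _ _ _).trans (by rw [hx, SS])
        exact (ha _).trans ((Z i (k0 + -k) (abs_le.2 ⟨by omega, by omega⟩)).trans (ha _).symm)
      · have hk' := abs_le.1 hk
        exact T i j k (abs_le.2 ⟨by omega, by omega⟩)
    · rintro (_|i) (_|j) k hk
      · exact Iff.rfl
      · have hk' := abs_le.1 hk
        have ha : ∀ u : M, (x = shift u k) ↔ u = shift zeroM (k0 + -k) :=
          fun u => (E2 _ _ _).trans (by rw [hx, SS])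
        exact (ha _).trans (((Z j (k0 + -k) (abs_le.2 ⟨by omega, by omega⟩)).symm).trans (ha _).symm)
      · have hk' := abs_le.1 hk
        have hb : ∀ u : M, (u = shift x k) ↔ u = shift zeroM (k0 + k) :=
          fun u => by rw [hx, SS]
        exact (hb _).trans ((Z i (k0 + k) (abs_le.2 ⟨by omega, by omega⟩)).trans (hb _).symm)
      · have hk' := abs_le.1 hk
        exact C i j k (abs_le.2 ⟨by omega, by omega⟩)
    · rintro (_|i) k hk
      · exact Iff.rfl
      · have hk' := abs_le.1 hk
        exact Z i k (abs_le.2 ⟨by omega, by omega⟩)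
    · rintro (_|i) k hk
      · exact Iff.rfl
      · have hk' := abs_le.1 hk
        exact N i k (abs_le.2 ⟨by omega, by omega⟩)
  · by_cases c1 : ∃ i0 : β, ∃ k0 : ℤ, |k0| ≤ ρ' ∧ x = shift (f i0) k0
    · -- x is near the f-side : take y to be the corresponding shift of g i0
      obtain ⟨i0, k0, hk0, hx⟩ := c1
      have hk0' := abs_le.1 hk0
      have hxA : ∀ (u : M) (k : ℤ), (x = shift u k) ↔ (f i0 = shift u (k - k0)) :=
        fun u k => by rw [hx]; exact E1 _ _ _ _
      have hxB : ∀ (u : M) (k : ℤ), (u = shift x k) ↔ (u = shift (f i0) (k0 + k)) :=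
        fun u k => by rw [hx, SS]
      have hyA : ∀ (u : M) (k : ℤ),
          (shift (g i0) k0 = shift u k) ↔ (g i0 = shift u (k - k0)) :=
        fun u k => E1 _ _ _ _
      have hyB : ∀ (u : M) (k : ℤ),
          (u = shift (shift (g i0) k0) k) ↔ (u = shift (g i0) (k0 + k)) :=
        fun u k => by rw [SS]
      refine ⟨shift (g i0) k0, ?_, ?_, ?_, ?_⟩
      · rintro (_|i) (_|j) k hk
        · have hk' := abs_le.1 hk
          exact (hxB x k).trans ((hxA _ _).trans
            (((T i0 i0 (k0 + k - k0) (abs_le.2 ⟨by omega, by omega⟩)).trans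
              (hyA _ _).symm).trans (hyB _ k).symm))
        · have hk' := abs_le.1 hk
          exact (hxB _ _).trans ((T i0 j (k0 + k) (abs_le.2 ⟨by omega, by omega⟩)).trans
            (hyB _ _).symm)
        · have hk' := abs_le.1 hk
          exact (hxA _ _).trans ((T i i0 (k - k0) (abs_le.2 ⟨by omega, by omega⟩)).trans
            (hyA _ _).symm)
        · have hk' := abs_le.1 hk
          exact T i j k (abs_le.2 ⟨by omega, by omega⟩)
      · rintro (_|i) (_|j) k hk
        · have hk' := abs_le.1 hk
          exact (hyB x k).trans ((hxA _ _).trans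
            (((C i0 i0 (k0 + k - k0) (abs_le.2 ⟨by omega, by omega⟩)).trans
              (hyA _ _).symm).trans (hxB _ k).symm))
        · have hk' := abs_le.1 hk
          exact (hxA _ _).trans ((C i0 j (k - k0) (abs_le.2 ⟨by omega, by omega⟩)).trans
            (hyA _ _).symm)
        · have hk' := abs_le.1 hk
          exact (hyB _ _).trans ((C i i0 (k0 + k) (abs_le.2 ⟨by omega, by omega⟩)).trans
            (hxB _ _).symm)
        · have hk' := abs_le.1 hk
          exact C i j k (abs_le.2 ⟨by omega, by omega⟩)
      · rintro (_|i) k hk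
        · have hk' := abs_le.1 hk
          exact (hxA _ _).trans ((Z i0 (k - k0) (abs_le.2 ⟨by omega, by omega⟩)).trans
            (hyA _ _).symm)
        · have hk' := abs_le.1 hk
          exact Z i k (abs_le.2 ⟨by omega, by omega⟩)
      · rintro (_|i) k hk
        · have hk' := abs_le.1 hk
          have e1 : shift x k = shift (f i0) (k0 + k) := by rw [hx, SS]
          have e2 : shift (shift (g i0) k0) k = shift (g i0) (k0 + k) := by rw [SS]
          show AM (shift x k) ↔ AM (shift (shift (g i0) k0) k)
          rw [e1, e2]
          exact N i0 (k0 + k) (abs_le.2 ⟨by omega, by omega⟩)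
        · have hk' := abs_le.1 hk
          exact N i k (abs_le.2 ⟨by omega, by omega⟩)
    · push_neg at c0 c1
      by_cases c2 : ∃ i0 : β, ∃ k0 : ℤ, |k0| ≤ ρ' ∧ x = shift (g i0) k0
      · -- x is near the g-side : take y to be the corresponding shift of f i0
        obtain ⟨i0, k0, hk0, hx⟩ := c2
        have hk0' := abs_le.1 hk0
        have hxA : ∀ (u : M) (k : ℤ), (x = shift u k) ↔ (g i0 = shift u (k - k0)) :=
          fun u k => by rw [hx]; exact E1 _ _ _ _
        have hxB : ∀ (u : M) (k : ℤ), (u = shift x k) ↔ (u = shift (g i0) (k0 + k)) :=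
          fun u k => by rw [hx, SS]
        have hyA : ∀ (u : M) (k : ℤ),
            (shift (f i0) k0 = shift u k) ↔ (f i0 = shift u (k - k0)) :=
          fun u k => E1 _ _ _ _
        have hyB : ∀ (u : M) (k : ℤ),
            (u = shift (shift (f i0) k0) k) ↔ (u = shift (f i0) (k0 + k)) :=
          fun u k => by rw [SS]
        refine ⟨shift (f i0) k0, ?_, ?_, ?_, ?_⟩
        · rintro (_|i) (_|j) k hk
          · have hk' := abs_le.1 hk
            exact (hxB x k).trans ((hxA _ _).trans
              ((((T i0 i0 (k0 + k - k0) (abs_le.2 ⟨by omega, by omega⟩)).symm).trans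
                (hyA _ _).symm).trans (hyB _ k).symm))
          · have hk' := abs_le.1 hk
            exact (hxB _ _).trans ((C j i0 (k0 + k) (abs_le.2 ⟨by omega, by omega⟩)).trans
              (hyB _ _).symm)
          · have hk' := abs_le.1 hk
            exact (hxA _ _).trans (((C i0 i (k - k0) (abs_le.2 ⟨by omega, by omega⟩)).symm).trans
              (hyA _ _).symm)
          · have hk' := abs_le.1 hk
            exact T i j k (abs_le.2 ⟨by omega, by omega⟩)
        · rintro (_|i) (_|j) k hk
          · have hk' := abs_le.1 hk
            exact (hyB x k).trans ((hxA _ _).trans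
              ((((C i0 i0 (k0 + k - k0) (abs_le.2 ⟨by omega, by omega⟩)).symm).trans
                (hyA _ _).symm).trans (hxB _ k).symm))
          · have hk' := abs_le.1 hk
            exact (hxA _ _).trans (((T j i0 (k - k0) (abs_le.2 ⟨by omega, by omega⟩)).symm).trans
              (hyA _ _).symm)
          · have hk' := abs_le.1 hk
            exact (hyB _ _).trans ((T i0 i (k0 + k) (abs_le.2 ⟨by omega, by omega⟩)).trans
              (hxB _ _).symm)
          · have hk' := abs_le.1 hk
            exact C i j k (abs_le.2 ⟨by omega, by omega⟩)
        · rintro (_|i) k hk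
          · have hk' := abs_le.1 hk
            exact (hxA _ _).trans (((Z i0 (k - k0) (abs_le.2 ⟨by omega, by omega⟩)).symm).trans
              (hyA _ _).symm)
          · have hk' := abs_le.1 hk
            exact Z i k (abs_le.2 ⟨by omega, by omega⟩)
        · rintro (_|i) k hk
          · have hk' := abs_le.1 hk
            have e1 : shift x k = shift (g i0) (k0 + k) := by rw [hx, SS]
            have e2 : shift (shift (f i0) k0) k = shift (f i0) (k0 + k) := by rw [SS]
            show AM (shift x k) ↔ AM (shift (shift (f i0) k0) k)
            rw [e1, e2]
            exact (N i0 (k0 + k) (abs_le.2 ⟨by omega, by omega⟩)).symm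
          · have hk' := abs_le.1 hk
            exact N i k (abs_le.2 ⟨by omega, by omega⟩)
      · -- x is far from everything : take y = x
        push_neg at c2
        refine ⟨x, ?_, ?_, ?_, ?_⟩
        · rintro (_|i) (_|j) k hk
          · exact Iff.rfl
          · have hk2 : |(-k)| ≤ ρ' := by rw [abs_neg]; exact hk
            exact iff_of_false (fun hh => c1 j (-k) hk2 ((E2 _ _ _).1 hh))
              (fun hh => c2 j (-k) hk2 ((E2 _ _ _).1 hh))
          · exact iff_of_false (c1 i k hk) (c2 i k hk)
          · have hk' := abs_le.1 hk
            exact T i j k (abs_le.2 ⟨by omega, by omega⟩)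
        · rintro (_|i) (_|j) k hk
          · exact Iff.rfl
          · exact iff_of_false (c2 j k hk) (c1 j k hk)
          · have hk2 : |(-k)| ≤ ρ' := by rw [abs_neg]; exact hk
            exact iff_of_false (fun hh => c1 i (-k) hk2 ((E2 _ _ _).1 hh))
              (fun hh => c2 i (-k) hk2 ((E2 _ _ _).1 hh))
          · have hk' := abs_le.1 hk
            exact C i j k (abs_le.2 ⟨by omega, by omega⟩)
        · rintro (_|i) k hk
          · exact Iff.rfl
          · have hk' := abs_le.1 hk
            exact Z i k (abs_le.2 ⟨by omega, by omega⟩)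
        · rintro (_|i) k hk
          · exact Iff.rfl
          · have hk' := abs_le.1 hk
            exact N i k (abs_le.2 ⟨by omega, by omega⟩)

end Ext
end MAProof
namespace MAProof
section EFMain
variable {M : Type*} [L.Structure M]

/-- reindexing map for the quantifier step -/
def uMap {α : Type*} {n : ℕ} : α ⊕ Fin (n + 1) → Option (α ⊕ Fin n)
  | .inl a => some (.inl a)
  | .inr i => Fin.lastCases none (fun j => some (.inr j)) i

lemma uMap_comp {α : Type*} {n : ℕ} (v : α → M) (xs : Fin n → M) (y : M) :
    (fun z : α ⊕ Fin (n + 1) => (uMap z).elim y (Sum.elim v xs)) =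
      Sum.elim v (Fin.snoc xs y) := by
  funext z
  rcases z with a | i
  · rfl
  · refine Fin.lastCases ?_ (fun j => ?_) i
    · simp [uMap, Fin.snoc_last]
    · simp [uMap, Fin.snoc_castSucc]

variable (h1 : ∀ x : M, PM (SM x) = x) (h2 : ∀ x : M, SM (PM x) = x)
include h1 h2

lemma ef {α : Type*} {n : ℕ} {φ : L.BoundedFormula α n} (hp : φ.IsPrenex) :
    ∀ ρ : ℤ, (rad φ : ℤ) ≤ ρ →
    ∀ (v : α → M) (xs : Fin n → M) (w : α → M) (ys : Fin n → M),
      Inv ρ (Sum.elim v xs) (Sum.elim w ys) → (φ.Realize v xs ↔ φ.Realize w ys) := by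
  induction hp with
  | of_isQF h => exact ef_qf h1 h2 h
  | @all n' ψ hψ ih =>
    intro ρ hρ v xs w ys hInv
    have hre : rad ψ.all = 2 * rad ψ := rfl
    rw [hre] at hρ
    push_cast at hρ
    have hρ'0 : (0:ℤ) ≤ (rad ψ : ℤ) := Int.natCast_nonneg _
    rw [BoundedFormula.realize_all, BoundedFormula.realize_all]
    constructor
    · intro hL x'
      obtain ⟨y, hy⟩ := inv_extend h1 h2 hρ'0 (by omega) (Inv.symm hInv) x'
      have hy' := (Inv.symm hy).comp (uMap (α := α) (n := n'))
      rw [show ((fun o : Option (α ⊕ Fin n') => o.elim y (Sum.elim v xs)) ∘ uMap) =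
          (fun z : α ⊕ Fin (n' + 1) => (uMap z).elim y (Sum.elim v xs)) from rfl,
        show ((fun o : Option (α ⊕ Fin n') => o.elim x' (Sum.elim w ys)) ∘ uMap) =
          (fun z : α ⊕ Fin (n' + 1) => (uMap z).elim x' (Sum.elim w ys)) from rfl,
        uMap_comp, uMap_comp] at hy'
      exact (ih (rad ψ : ℤ) le_rfl v (Fin.snoc xs y) w (Fin.snoc ys x') hy').1 (hL y)
    · intro hR x'
      obtain ⟨y, hy⟩ := inv_extend h1 h2 hρ'0 (by omega) hInv x'
      have hy' := hy.comp (uMap (α := α) (n := n'))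
      rw [show ((fun o : Option (α ⊕ Fin n') => o.elim x' (Sum.elim v xs)) ∘ uMap) =
          (fun z : α ⊕ Fin (n' + 1) => (uMap z).elim x' (Sum.elim v xs)) from rfl,
        show ((fun o : Option (α ⊕ Fin n') => o.elim y (Sum.elim w ys)) ∘ uMap) =
          (fun z : α ⊕ Fin (n' + 1) => (uMap z).elim y (Sum.elim w ys)) from rfl,
        uMap_comp, uMap_comp] at hy'
      exact (ih (rad ψ : ℤ) le_rfl v (Fin.snoc xs x') w (Fin.snoc ys y) hy').2 (hR y)
  | @ex n' ψ hψ ih =>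
    intro ρ hρ v xs w ys hInv
    have hre : rad ψ.ex = 2 * (rad ψ + 0) + 0 := rfl
    rw [hre] at hρ
    push_cast at hρ
    have hρ'0 : (0:ℤ) ≤ (rad ψ : ℤ) := Int.natCast_nonneg _
    rw [BoundedFormula.realize_ex, BoundedFormula.realize_ex]
    constructor
    · rintro ⟨x', hx'⟩
      obtain ⟨y, hy⟩ := inv_extend h1 h2 hρ'0 (by omega) hInv x'
      have hy' := hy.comp (uMap (α := α) (n := n'))
      rw [show ((fun o : Option (α ⊕ Fin n') => o.elim x' (Sum.elim v xs)) ∘ uMap) =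
          (fun z : α ⊕ Fin (n' + 1) => (uMap z).elim x' (Sum.elim v xs)) from rfl,
        show ((fun o : Option (α ⊕ Fin n') => o.elim y (Sum.elim w ys)) ∘ uMap) =
          (fun z : α ⊕ Fin (n' + 1) => (uMap z).elim y (Sum.elim w ys)) from rfl,
        uMap_comp, uMap_comp] at hy'
      exact ⟨y, (ih (rad ψ : ℤ) le_rfl v (Fin.snoc xs x') w (Fin.snoc ys y) hy').1 hx'⟩
    · rintro ⟨x', hx'⟩
      obtain ⟨y, hy⟩ := inv_extend h1 h2 hρ'0 (by omega) (Inv.symm hInv) x'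
      have hy' := (Inv.symm hy).comp (uMap (α := α) (n := n'))
      rw [show ((fun o : Option (α ⊕ Fin n') => o.elim y (Sum.elim v xs)) ∘ uMap) =
          (fun z : α ⊕ Fin (n' + 1) => (uMap z).elim y (Sum.elim v xs)) from rfl,
        show ((fun o : Option (α ⊕ Fin n') => o.elim x' (Sum.elim w ys)) ∘ uMap) =
          (fun z : α ⊕ Fin (n' + 1) => (uMap z).elim x' (Sum.elim w ys)) from rfl,
        uMap_comp, uMap_comp] at hy'
      exact ⟨y, (ih (rad ψ : ℤ) le_rfl v (Fin.snoc xs y) w (Fin.snoc ys x') hy').2 hx'⟩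

end EFMain
end MAProof

set_option maxHeartbeats 1000000 in
/-- If `φ(x, y) = φ'(x, y, c̄)` is mutually algebraic over a model `M` of `T_R`, where `φ'`
is prenex with radius `r`, then there is a finite set `X ⊆ M` such that whenever
`M ⊨ φ(a, b)`, either `a` and `b` are at distance at most `r`, or `a ∈ X`, or `b ∈ X`. -/
theorem mutuallyAlgebraic_close_or_exceptional (R : Set (List Bool)) (hTree : IsBinaryTree R)
    (M : Type*) [L.Structure M] (hM : M ⊨ TR R) {m : ℕ}
    (φ' : L.Formula (Fin 2 ⊕ Fin m)) (hφ' : φ'.IsPrenex) (c : Fin m → M)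
    (hma : IsMutuallyAlgebraic L M (φ'.relabel (Sum.map id c))) :
    ∃ X : Set M, X.Finite ∧ ∀ a b : M,
      (φ'.relabel (Sum.map id c)).Realize (Sum.elim ![a, b] id) →
        (∃ k : ℤ, |k| ≤ (rad φ' : ℤ) ∧ b = shift a k) ∨ a ∈ X ∨ b ∈ X := by
  classical
  have h1 := MAProof.M_PS hM
  have h2 := MAProof.M_SP hM
  have h3 := MAProof.M_acyc hM
  set r : ℤ := (rad φ' : ℤ) with hr
  have hr0 : 0 ≤ r := Int.natCast_nonneg _
  by_contra hcon
  push_neg at hcon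
  obtain ⟨k, hk⟩ := hma
  -- balls
  set Bd : M → Set M := fun p => (fun κ : ℤ => shift p κ) '' Set.Icc (-r) r with hBd
  have BdFin : ∀ p, (Bd p).Finite := fun p => (Set.finite_Icc _ _).image _
  have sepOf : ∀ {x p : M}, x ∉ Bd p → ∀ κ : ℤ, |κ| ≤ r → x ≠ shift p κ := by
    intro x p hx κ hκ he
    exact hx ⟨κ, Set.mem_Icc.2 (abs_le.1 hκ), he.symm⟩
  have sepSym : ∀ {x p : M}, (∀ κ : ℤ, |κ| ≤ r → x ≠ shift p κ) →
      ∀ κ : ℤ, |κ| ≤ r → p ≠ shift x κ := by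
    intro x p h κ hκ he
    exact h (-κ) (by rw [abs_neg]; exact hκ)
      ((MAProof.eq_shift_comm h1 h2).1 he)
  -- the recursively constructed sequence of far pairs
  set base : Set M := Bd zeroM ∪ ⋃ t : Fin m, Bd (c t) with hbase
  have baseFin : base.Finite := (BdFin _).union (Set.finite_iUnion fun t => BdFin _)
  set pa : ∀ X : Set M, X.Finite → M := fun X hX => (hcon X hX).choose with hpa
  set pb : ∀ X : Set M, X.Finite → M := fun X hX => (hcon X hX).choose_spec.choose with hpb
  have pspec : ∀ (X : Set M) (hX : X.Finite),
      (φ'.relabel (Sum.map id c)).Realize (Sum.elim ![pa X hX, pb X hX] id) ∧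
      (∀ κ : ℤ, |κ| ≤ r → pb X hX ≠ shift (pa X hX) κ) ∧
      pa X hX ∉ X ∧ pb X hX ∉ X := fun X hX => (hcon X hX).choose_spec.choose_spec
  set seq : ℕ → {X : Set M // X.Finite} := fun n => Nat.rec ⟨base, baseFin⟩
    (fun _ X => ⟨X.1 ∪ Bd (pa X.1 X.2) ∪ Bd (pb X.1 X.2),
      (X.2.union (BdFin _)).union (BdFin _)⟩) n with hseq
  set A : ℕ → M := fun n => pa (seq n).1 (seq n).2 with hA
  set B : ℕ → M := fun n => pb (seq n).1 (seq n).2 with hB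
  have seqSucc : ∀ n, (seq (n+1)).1 = (seq n).1 ∪ Bd (A n) ∪ Bd (B n) := fun n => rfl
  have seqMono : ∀ p q : ℕ, p ≤ q → (seq p).1 ⊆ (seq q).1 := by
    intro p q hpq
    induction q with
    | zero => rw [Nat.le_zero.1 hpq]
    | succ q ih =>
      rcases Nat.lt_or_ge p (q+1) with hlt | hge
      · refine subset_trans (ih (by omega)) ?_
        rw [seqSucc]
        exact subset_trans Set.subset_union_left Set.subset_union_left
      · rw [Nat.le_antisymm hpq hge]
  have base_sub : ∀ n, base ⊆ (seq n).1 := fun n => seqMono 0 n (Nat.zero_le n)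
  have hAB : ∀ n, A n ∉ (seq n).1 ∧ B n ∉ (seq n).1 := fun n =>
    ⟨(pspec (seq n).1 (seq n).2).2.2.1, (pspec (seq n).1 (seq n).2).2.2.2⟩
  have hballA : ∀ p q : ℕ, p < q → A q ∉ Bd (A p) ∧ A q ∉ Bd (B p) ∧
      B q ∉ Bd (A p) ∧ B q ∉ Bd (B p) := by
    intro p q hpq
    have hsub : Bd (A p) ∪ Bd (B p) ⊆ (seq q).1 := by
      refine subset_trans ?_ (seqMono (p+1) q hpq)
      rw [seqSucc]
      exact Set.union_subset
        (subset_trans Set.subset_union_right Set.subset_union_left)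
        Set.subset_union_right
    refine ⟨fun hc => (hAB q).1 (hsub (Or.inl hc)), fun hc => (hAB q).1 (hsub (Or.inr hc)),
      fun hc => (hAB q).2 (hsub (Or.inl hc)), fun hc => (hAB q).2 (hsub (Or.inr hc))⟩
  have hbase' : ∀ n, (A n ∉ Bd zeroM ∧ ∀ t, A n ∉ Bd (c t)) ∧
      (B n ∉ Bd zeroM ∧ ∀ t, B n ∉ Bd (c t)) := by
    intro n
    have hA' := (hAB n).1
    have hB' := (hAB n).2
    have hb := base_sub n
    constructor
    · exact ⟨fun hc => hA' (hb (Or.inl hc)),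
        fun t hc => hA' (hb (Or.inr (Set.mem_iUnion.2 ⟨t, hc⟩)))⟩
    · exact ⟨fun hc => hB' (hb (Or.inl hc)),
        fun t hc => hB' (hb (Or.inr (Set.mem_iUnion.2 ⟨t, hc⟩)))⟩
  -- pigeonhole on neighborhood patterns
  set pat : M → (Fin (2 * rad φ' + 1) → Bool) :=
    fun x i => decide (AM (shift x ((i : ℤ) - r))) with hpat
  set Nn : ℕ := 2 ^ (2 * rad φ' + 1) * k + 1 with hNn
  have hcard : Fintype.card (Fin (2 * rad φ' + 1) → Bool) * k < Fintype.card (Fin Nn) := by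
    simp [Fintype.card_fun, hNn]
  obtain ⟨p, hp⟩ := Fintype.exists_lt_card_fiber_of_mul_lt_card
    (fun j : Fin Nn => pat (B j)) hcard
  set J : Finset (Fin Nn) := Finset.univ.filter (fun j => pat (B (j : ℕ)) = p) with hJ
  have hJcard : k < J.card := hp
  obtain ⟨j0, hj0⟩ := Finset.card_pos.1 (by omega : 0 < J.card)
  -- distinctness of the B's
  have Bne : ∀ {i j : ℕ}, i < j → B j ≠ B i := by
    intro i j hij he
    have := sepOf (hballA i j hij).2.2.2 0 (by simpa using hr0)
    rw [MAProof.shift_zero' h1 h2] at this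
    exact this he
  -- the key swap: φ(A j0, B j) holds for every j ∈ J
  have hswap : ∀ j ∈ J, (φ'.relabel (Sum.map id c)).Realize
      (Sum.elim ![A (j0 : ℕ), B (j : ℕ)] id) := by
    intro j hj
    by_cases hjj : (j : ℕ) = (j0 : ℕ)
    · rw [hjj]
      exact (pspec (seq (j0 : ℕ)).1 (seq (j0 : ℕ)).2).1
    · -- translate realization through relabel
      have hrel : ∀ a b : M, (φ'.relabel (Sum.map id c)).Realize (Sum.elim ![a, b] id) ↔
          φ'.Realize (Sum.elim ![a, b] c) := by
        intro a b
        rw [Formula.realize_relabel]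
        have : (Sum.elim ![a, b] id ∘ Sum.map id c) = Sum.elim ![a, b] c := by
          funext z; rcases z with z | z <;> rfl
        rw [this]
      rw [hrel]
      have hreal0 : φ'.Realize (Sum.elim ![A (j0 : ℕ), B (j0 : ℕ)] c) :=
        (hrel _ _).1 (pspec (seq (j0 : ℕ)).1 (seq (j0 : ℕ)).2).1
      -- separation facts
      have hsep1 : ∀ κ : ℤ, |κ| ≤ r → B (j0 : ℕ) ≠ shift (A (j0 : ℕ)) κ :=
        (pspec (seq (j0 : ℕ)).1 (seq (j0 : ℕ)).2).2.1
      have hordered : ∀ {u v : Fin Nn}, (u : ℕ) ≠ (v : ℕ) →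
          (∀ κ : ℤ, |κ| ≤ r → B (u : ℕ) ≠ shift (B (v : ℕ)) κ) := by
        intro u v huv
        rcases Nat.lt_or_ge (u : ℕ) (v : ℕ) with hlt | hge
        · exact sepSym (sepOf (hballA _ _ hlt).2.2.2)
        · exact sepOf (hballA _ _ (by omega)).2.2.2
      have hsepBB : ∀ κ : ℤ, |κ| ≤ r → B (j0 : ℕ) ≠ shift (B (j : ℕ)) κ :=
        hordered (fun hc => hjj hc.symm)
      have hsepBB' : ∀ κ : ℤ, |κ| ≤ r → B (j : ℕ) ≠ shift (B (j0 : ℕ)) κ := hordered hjj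
      have hsepBA : ∀ κ : ℤ, |κ| ≤ r → B (j : ℕ) ≠ shift (A (j0 : ℕ)) κ := by
        rcases Nat.lt_or_ge (j : ℕ) (j0 : ℕ) with hlt | hge
        · exact sepSym (sepOf (hballA _ _ hlt).2.1)
        · exact sepOf (hballA _ _ (by omega)).2.2.1
      -- same neighborhood pattern
      have hpatj : pat (B (j : ℕ)) = pat (B (j0 : ℕ)) := by
        have h1' := (Finset.mem_filter.1 hj).2
        have h2' := (Finset.mem_filter.1 hj0).2
        rw [h1', h2']
      have hN : ∀ κ : ℤ, |κ| ≤ r →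
          (AM (shift (B (j0 : ℕ)) κ) ↔ AM (shift (B (j : ℕ)) κ)) := by
        intro κ hκ
        have hκ' := abs_le.1 hκ
        have hbnd : (κ + r).toNat < 2 * rad φ' + 1 := by omega
        have hcf := congrFun hpatj (⟨(κ + r).toNat, hbnd⟩ : Fin (2 * rad φ' + 1))
        rw [hpat] at hcf
        simp only at hcf
        have hidx : ((((κ + r).toNat : ℕ) : ℤ)) - r = κ := by omega
        rw [hidx] at hcf
        exact (decide_eq_decide.mp hcf).symm
      -- build the invariant between the two valuations
      set V : Fin 2 ⊕ Fin m → M := Sum.elim ![A (j0 : ℕ), B (j0 : ℕ)] c with hV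
      set W : Fin 2 ⊕ Fin m → M := Sum.elim ![A (j0 : ℕ), B (j : ℕ)] c with hW
      have hVW : ∀ z : Fin 2 ⊕ Fin m, z ≠ Sum.inl 1 → V z = W z := by
        rintro (i | t) hz
        · fin_cases i
          · rfl
          · exact absurd rfl hz
        · rfl
      have hV1 : V (Sum.inl 1) = B (j0 : ℕ) := rfl
      have hW1 : W (Sum.inl 1) = B (j : ℕ) := rfl
      -- separation from every shared coordinate
      have HSep : ∀ z : Fin 2 ⊕ Fin m, z ≠ Sum.inl 1 →
          (∀ κ : ℤ, |κ| ≤ r → B (j0 : ℕ) ≠ shift (V z) κ) ∧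
          (∀ κ : ℤ, |κ| ≤ r → B (j : ℕ) ≠ shift (V z) κ) := by
        rintro (i | t) hz
        · fin_cases i
          · exact ⟨hsep1, hsepBA⟩
          · exact absurd rfl hz
        · exact ⟨sepOf ((hbase' (j0 : ℕ)).2.2 t), sepOf ((hbase' (j : ℕ)).2.2 t)⟩
      have hInv : MAProof.Inv r V W := by
        refine ⟨?_, ?_, ?_, ?_⟩
        · intro i j' κ hκ
          by_cases hi : i = Sum.inl 1 <;> by_cases hj' : j' = Sum.inl 1
          · subst hi; subst hj'
            rw [hV1, hW1]
            by_cases hκ0 : κ = 0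
            · subst hκ0
              rw [MAProof.shift_zero' h1 h2, MAProof.shift_zero' h1 h2]
              simp
            · exact iff_of_false (fun hc => MAProof.shift_ne_self h1 h2 h3 hκ0 _ hc.symm)
                (fun hc => MAProof.shift_ne_self h1 h2 h3 hκ0 _ hc.symm)
          · subst hi
            rw [hV1, hW1, ← hVW j' hj']
            have hκ2 : |(-κ)| ≤ r := by rw [abs_neg]; exact hκ
            exact iff_of_false
              (fun hc => (HSep j' hj').1 (-κ) hκ2 ((MAProof.eq_shift_comm h1 h2).1 hc))
              (fun hc => (HSep j' hj').2 (-κ) hκ2 ((MAProof.eq_shift_comm h1 h2).1 hc))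
          · subst hj'
            rw [hV1, hW1, ← hVW i hi]
            exact iff_of_false ((HSep i hi).1 κ hκ) ((HSep i hi).2 κ hκ)
          · rw [hVW i hi, hVW j' hj']
        · intro i j' κ hκ
          by_cases hi : i = Sum.inl 1 <;> by_cases hj' : j' = Sum.inl 1
          · subst hi; subst hj'
            rw [hV1, hW1]
            exact iff_of_false (hsepBB κ hκ) (hsepBB' κ hκ)
          · subst hi
            rw [hV1, hW1, ← hVW j' hj']
            exact iff_of_false ((HSep j' hj').1 κ hκ) ((HSep j' hj').2 κ hκ)
          · subst hj'
            rw [hV1, hW1, ← hVW i hi]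
            have hκ2 : |(-κ)| ≤ r := by rw [abs_neg]; exact hκ
            exact iff_of_false
              (fun hc => (HSep i hi).2 (-κ) hκ2 ((MAProof.eq_shift_comm h1 h2).1 hc))
              (fun hc => (HSep i hi).1 (-κ) hκ2 ((MAProof.eq_shift_comm h1 h2).1 hc))
          · rw [hVW i hi, hVW j' hj']
        · intro i κ hκ
          by_cases hi : i = Sum.inl 1
          · subst hi
            rw [hV1, hW1]
            exact iff_of_false (sepOf ((hbase' (j0 : ℕ)).2.1) κ hκ)
              (sepOf ((hbase' (j : ℕ)).2.1) κ hκ)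
          · rw [hVW i hi]
        · intro i κ hκ
          by_cases hi : i = Sum.inl 1
          · subst hi
            rw [hV1, hW1]
            exact hN κ hκ
          · rw [hVW i hi]
      -- apply the EF transfer lemma
      have hcomp : ∀ (U : Fin 2 ⊕ Fin m → M),
          Sum.elim U (default : Fin 0 → M) =
            U ∘ (Sum.elim id (fun i : Fin 0 => i.elim0)) := by
        intro U; funext z; rcases z with z | z
        · rfl
        · exact z.elim0
      have hInv' : MAProof.Inv r (Sum.elim V (default : Fin 0 → M))
          (Sum.elim W (default : Fin 0 → M)) := by
        rw [hcomp V, hcomp W]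
        exact hInv.comp _
      exact (MAProof.ef h1 h2 hφ' r le_rfl V default W default hInv').1 hreal0
  -- contradiction with mutual algebraicity
  obtain ⟨hfin, hncard⟩ := hk {0} ⟨0, rfl⟩ ⟨1, by simp⟩ ![A (j0 : ℕ), A (j0 : ℕ)]
  set Sset : Set (Fin 2 → M) := {v : Fin 2 → M |
    (∀ i ∈ ({0} : Set (Fin 2)), v i = (![A (j0 : ℕ), A (j0 : ℕ)]) i) ∧
    (φ'.relabel (Sum.map id c)).Realize (Sum.elim v id)} with hSset
  have hmem : ∀ j ∈ J, (![A (j0 : ℕ), B (j : ℕ)]) ∈ Sset := by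
    intro j hj
    refine ⟨?_, hswap j hj⟩
    intro i hi
    rw [Set.mem_singleton_iff.1 hi]
    rfl
  have hinj : Set.InjOn (fun j : Fin Nn => ![A (j0 : ℕ), B (j : ℕ)]) J := by
    intro u hu v hv he
    by_contra huv
    have hne : (u : ℕ) ≠ (v : ℕ) := fun hc => huv (Fin.ext hc)
    have hBe : B (u : ℕ) = B (v : ℕ) := by
      have := congrFun he 1
      simpa using this
    rcases Nat.lt_or_ge (u : ℕ) (v : ℕ) with hlt | hge
    · exact Bne hlt hBe.symm
    · exact Bne (by omega) hBe
  have hsub : ((J.image (fun j : Fin Nn => ![A (j0 : ℕ), B (j : ℕ)])) : Set (Fin 2 → M)) ⊆ Sset := by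
    intro v hv
    obtain ⟨j, hj, rfl⟩ := Finset.mem_image.1 (Finset.mem_coe.1 hv)
    exact hmem j hj
  have : J.card ≤ k := by
    calc J.card = (J.image (fun j : Fin Nn => ![A (j0 : ℕ), B (j : ℕ)])).card :=
          (Finset.card_image_of_injOn hinj).symm
    _ = ((J.image (fun j : Fin Nn => ![A (j0 : ℕ), B (j : ℕ)])) : Set (Fin 2 → M)).ncard :=
          (Set.ncard_coe_finset _).symm
    _ ≤ Sset.ncard := Set.ncard_le_ncard hsub hfin
    _ ≤ k := hncard
  omega
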